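/- Let E be a meet-semilattice and let A be the unitization over ℂ of the semigroup algebra MonoidAlgebra ℂ E. For e₀, e₁, …, e_n ∈ E (n ≥ 0), the element p := e₀ · (1 − e₁) ⋯ (1 − e_n) of A is nonzero if and only if e₀ ⊓ e_i ≠ e₀ for every i = 1, …, n. -/

import Mathlib

open scoped Classical

instance semilatticeInfCommSemigroup (E : Type*) [SemilatticeInf E] : CommSemigroup E where
  mul := (· ⊓ ·)
  mul_assoc := inf_assoc
  mul_comm := inf_comm

noncomputable def semilatticeBasis {E : Type*} [SemilatticeInf E] (e : E) :
    Unitization ℂ (MonoidAlgebra ℂ E) :=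
  Unitization.inr (MonoidAlgebra.single e (1 : ℂ))

lemma sb_mul {E : Type*} [SemilatticeInf E] (e f : E) :
    semilatticeBasis e * semilatticeBasis f = semilatticeBasis (e ⊓ f) := by
  simp only [semilatticeBasis, ← Unitization.inr_mul, MonoidAlgebra.single_mul_single, one_mul]
  rfl

/-- Character associated to `e₀`. -/
noncomputable def chi {E : Type*} [SemilatticeInf E] (e₀ : E) :
    Unitization ℂ (MonoidAlgebra ℂ E) →ₐ[ℂ] ℂ :=
  Unitization.lift <| MonoidAlgebra.liftMagma ℂ
    { toFun := fun e => if e₀ ≤ e then (1 : ℂ) else 0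
      map_mul' := fun a b => by
        have : a * b = a ⊓ b := rfl
        rw [this]
        by_cases ha : e₀ ≤ a <;> by_cases hb : e₀ ≤ b <;>
          simp [ha, hb, le_inf_iff] }

lemma chi_sb {E : Type*} [SemilatticeInf E] (e₀ e : E) :
    chi e₀ (semilatticeBasis e) = if e₀ ≤ e then (1 : ℂ) else 0 := by
  simp [chi, semilatticeBasis, Unitization.lift_apply,
    MonoidAlgebra.liftMagma_apply_apply]

/-- In the unitization of the semigroup algebra of a meet-semilattice, the element
`p = e₀ (1-e₁) ⋯ (1-eₙ)` is nonzero iff `e₀ ⊓ eᵢ ≠ e₀` for every `i = 1, …, n`. -/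
theorem stmt_1 {E : Type*} [SemilatticeInf E] (e₀ : E) (es : List E) :
    semilatticeBasis e₀ * (es.map fun e => 1 - semilatticeBasis e).prod ≠ 0 ↔
      ∀ e ∈ es, e₀ ⊓ e ≠ e₀ := by
  constructor
  · intro hp e he hinf
    apply hp
    obtain ⟨l₁, l₂, rfl⟩ := List.append_of_mem he
    have h0 : semilatticeBasis e₀ * (1 - semilatticeBasis e) = 0 := by
      rw [mul_sub, mul_one, sb_mul, hinf, sub_self]
    rw [List.map_append, List.map_cons, List.prod_append, List.prod_cons]
    calc semilatticeBasis e₀ * (((l₁.map fun e => 1 - semilatticeBasis e).prod) *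
          ((1 - semilatticeBasis e) * (l₂.map fun e => 1 - semilatticeBasis e).prod))
        = (semilatticeBasis e₀ * (1 - semilatticeBasis e)) *
          (((l₁.map fun e => 1 - semilatticeBasis e).prod) *
            (l₂.map fun e => 1 - semilatticeBasis e).prod) := by ring
      _ = 0 := by rw [h0, zero_mul]
  · intro h hp
    have := congrArg (chi e₀) hp
    rw [map_mul, map_zero, map_list_prod, chi_sb] at this
    simp only [List.map_map, Function.comp] at this
    have hle : ¬ e₀ ≤ e₀ ↔ False := by simp
    rw [if_pos le_rfl, one_mul] at this
    have : ((es.map fun e => chi e₀ (1 - semilatticeBasis e)).prod) = 0 := this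
    have hmem := List.prod_eq_zero_iff.mp this
    obtain ⟨e, he, hx0⟩ := List.mem_map.mp hmem
    rw [map_sub, map_one, chi_sb] at hx0
    by_cases hle : e₀ ≤ e
    · exact h e he (inf_eq_left.mpr hle)
    · simp [hle] at hx0
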